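/- Let g be a Lie algebra over ℂ. Define S(x) : (g⊕ℂ)⊗(g⊕ℂ) → (g⊕ℂ)⊗(g⊕ℂ)⊗ℂ((x)) by S(x)(1⊗1)=1⊗1, S(x)(1⊗a)=1⊗a, S(x)(a⊗1)=a⊗1, and S(x)(a⊗b) = a⊗b + x⁻¹(1⊗[a,b] − [a,b]⊗1) for a,b ∈ g. Then S satisfies the unitarity condition S₂₁(−x)S(x) = 1 and the quantum Yang–Baxter equation S₁₂(x)S₁₃(x+z)S₂₃(z) = S₂₃(z)S₁₃(x+z)S₁₂(x). -/

import Mathlib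

set_option synthInstance.maxHeartbeats 1000000
set_option maxHeartbeats 1000000

noncomputable section

open TensorProduct

variable (g : Type) [LieRing g] [LieAlgebra ℂ g]

/-- `U = g ⊕ ℂ`, with distinguished vector `1 = (0,1)`. -/
abbrev Ue (g : Type) [LieRing g] [LieAlgebra ℂ g] : Type := g × ℂ

/-- The bracket of `g` as a bilinear map. -/
def brMap : g →ₗ[ℂ] g →ₗ[ℂ] g :=
  LinearMap.mk₂ ℂ (fun a b => ⁅a, b⁆) add_lie smul_lie lie_add lie_smul

/-- The linear map `g → U ⊗ U`, `c ↦ 1 ⊗ c - c ⊗ 1` (where `c ∈ g ⊆ U`, `1 = (0,1)`). -/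
def eMap : g →ₗ[ℂ] Ue g ⊗[ℂ] Ue g :=
  ((TensorProduct.mk ℂ (Ue g) (Ue g) ((0 : g), (1 : ℂ))).comp (LinearMap.inl ℂ g ℂ)) -
    (((TensorProduct.mk ℂ (Ue g) (Ue g)).flip ((0 : g), (1 : ℂ))).comp (LinearMap.inl ℂ g ℂ))

/-- The linear map `T : U ⊗ U → U ⊗ U` with `T(u ⊗ v) = 1 ⊗ [u,v] - [u,v] ⊗ 1`
(`u, v` taken mod `ℂ1`), so that `S(x) = id + x⁻¹ T`. -/
def Tmap : Ue g ⊗[ℂ] Ue g →ₗ[ℂ] Ue g ⊗[ℂ] Ue g :=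
  TensorProduct.lift
    (((brMap g).compl₁₂ (LinearMap.fst ℂ g ℂ) (LinearMap.fst ℂ g ℂ)).compr₂ (eMap g))

/-- The field `ℂ(x, z)` of rational functions in the two variables `x = X 0`, `z = X 1`. -/
abbrev KK : Type := FractionRing (MvPolynomial (Fin 2) ℂ)

/-- The rational `S`-operator `S(c) = id + c⁻¹ T` on `K ⊗ (U ⊗ U)`. -/
def Sop (c : KK) : KK ⊗[ℂ] (Ue g ⊗[ℂ] Ue g) →ₗ[KK] KK ⊗[ℂ] (Ue g ⊗[ℂ] Ue g) :=
  LinearMap.id + c⁻¹ • (Tmap g).baseChange KK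

/-- `S₂₁(c) = σ ∘ S(c) ∘ σ` where `σ` swaps the tensor factors. -/
def S21op (c : KK) : KK ⊗[ℂ] (Ue g ⊗[ℂ] Ue g) →ₗ[KK] KK ⊗[ℂ] (Ue g ⊗[ℂ] Ue g) :=
  LinearMap.id + c⁻¹ •
    ((TensorProduct.comm ℂ (Ue g) (Ue g)).toLinearMap ∘ₗ Tmap g ∘ₗ
      (TensorProduct.comm ℂ (Ue g) (Ue g)).toLinearMap).baseChange KK

/-- `T` acting on the factors (1,2) of `U ⊗ U ⊗ U = U ⊗ (U ⊗ U)`. -/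
def T12 : Ue g ⊗[ℂ] (Ue g ⊗[ℂ] Ue g) →ₗ[ℂ] Ue g ⊗[ℂ] (Ue g ⊗[ℂ] Ue g) :=
  (TensorProduct.assoc ℂ (Ue g) (Ue g) (Ue g)).toLinearMap ∘ₗ
    (Tmap g).rTensor (Ue g) ∘ₗ
      (TensorProduct.assoc ℂ (Ue g) (Ue g) (Ue g)).symm.toLinearMap

/-- `T` acting on the factors (2,3). -/
def T23 : Ue g ⊗[ℂ] (Ue g ⊗[ℂ] Ue g) →ₗ[ℂ] Ue g ⊗[ℂ] (Ue g ⊗[ℂ] Ue g) :=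
  (Tmap g).lTensor (Ue g)

/-- The permutation of `U ⊗ U ⊗ U` swapping factors 2 and 3. -/
def P23 : Ue g ⊗[ℂ] (Ue g ⊗[ℂ] Ue g) →ₗ[ℂ] Ue g ⊗[ℂ] (Ue g ⊗[ℂ] Ue g) :=
  (TensorProduct.comm ℂ (Ue g) (Ue g)).toLinearMap.lTensor (Ue g)

/-- `T` acting on the factors (1,3). -/
def T13 : Ue g ⊗[ℂ] (Ue g ⊗[ℂ] Ue g) →ₗ[ℂ] Ue g ⊗[ℂ] (Ue g ⊗[ℂ] Ue g) :=
  P23 g ∘ₗ T12 g ∘ₗ P23 g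

/-- `S_{ij}(c) = id + c⁻¹ T_{ij}` on `K ⊗ (U ⊗ U ⊗ U)`, extended `K`-linearly. -/
def Sij (T : Ue g ⊗[ℂ] (Ue g ⊗[ℂ] Ue g) →ₗ[ℂ] Ue g ⊗[ℂ] (Ue g ⊗[ℂ] Ue g)) (c : KK) :
    KK ⊗[ℂ] (Ue g ⊗[ℂ] (Ue g ⊗[ℂ] Ue g)) →ₗ[KK] KK ⊗[ℂ] (Ue g ⊗[ℂ] (Ue g ⊗[ℂ] Ue g)) :=
  LinearMap.id + c⁻¹ • T.baseChange KK

/-- The variable `x` of `ℂ(x,z)`. -/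
def xv : KK := algebraMap (MvPolynomial (Fin 2) ℂ) KK (MvPolynomial.X 0)

/-- The variable `z` of `ℂ(x,z)`. -/
def zv : KK := algebraMap (MvPolynomial (Fin 2) ℂ) KK (MvPolynomial.X 1)

-- ===== auxiliary lemmas =====
lemma eMap_apply (c : g) :
    eMap g c = ((0:g),(1:ℂ)) ⊗ₜ[ℂ] ((c:g),(0:ℂ)) - ((c:g),(0:ℂ)) ⊗ₜ[ℂ] ((0:g),(1:ℂ)) := by
  simp [eMap, TensorProduct.mk]

lemma Tmap_tmul (u v : Ue g) : Tmap g (u ⊗ₜ[ℂ] v) = eMap g ⁅u.1, v.1⁆ := by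
  simp [Tmap, brMap]

lemma Tmap_eMap (c : g) : Tmap g (eMap g c) = 0 := by
  simp [eMap_apply, Tmap_tmul]

lemma TT : Tmap g ∘ₗ Tmap g = 0 := by
  apply TensorProduct.ext'
  intro u v
  simp [Tmap_tmul, Tmap_eMap]

lemma comm_eMap (c : g) :
    (TensorProduct.comm ℂ (Ue g) (Ue g)) (eMap g c) = - eMap g c := by
  simp [eMap_apply]

lemma sigmaT : (TensorProduct.comm ℂ (Ue g) (Ue g)).toLinearMap ∘ₗ Tmap g ∘ₗ
    (TensorProduct.comm ℂ (Ue g) (Ue g)).toLinearMap = Tmap g := by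
  apply TensorProduct.ext'
  intro u v
  simp only [LinearMap.coe_comp, LinearEquiv.coe_coe, Function.comp_apply, comm_tmul,
    Tmap_tmul, comm_eMap]
  rw [← map_neg, ← lie_skew, neg_neg]

abbrev W (g : Type) [LieRing g] [LieAlgebra ℂ g] := Ue g ⊗[ℂ] (Ue g ⊗[ℂ] Ue g)
def one' : Ue g := ((0:g),(1:ℂ))
abbrev emb : g →ₗ[ℂ] Ue g := LinearMap.inl ℂ g ℂ

lemma ext3 {f h : W g →ₗ[ℂ] W g}
    (H : ∀ u v w : Ue g, f (u ⊗ₜ (v ⊗ₜ w)) = h (u ⊗ₜ (v ⊗ₜ w))) : f = h := by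
  apply TensorProduct.ext'
  intro u q
  induction q using TensorProduct.induction_on with
  | zero => simp [tmul_zero]
  | tmul v w => exact H u v w
  | add q1 q2 h1 h2 => rw [tmul_add, map_add, map_add, h1, h2]

def E1 : g →ₗ[ℂ] W g :=
  ((TensorProduct.mk ℂ (Ue g) (Ue g ⊗[ℂ] Ue g)).flip (one' g ⊗ₜ one' g)) ∘ₗ emb g
def E2 : g →ₗ[ℂ] W g :=
  (TensorProduct.mk ℂ (Ue g) (Ue g ⊗[ℂ] Ue g) (one' g)) ∘ₗ
    ((TensorProduct.mk ℂ (Ue g) (Ue g)).flip (one' g)) ∘ₗ emb g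
def E3 : g →ₗ[ℂ] W g :=
  (TensorProduct.mk ℂ (Ue g) (Ue g ⊗[ℂ] Ue g) (one' g)) ∘ₗ
    (TensorProduct.mk ℂ (Ue g) (Ue g) (one' g)) ∘ₗ emb g

@[simp] lemma E1_apply (c : g) : E1 g c = ((c:g),(0:ℂ)) ⊗ₜ[ℂ] (one' g ⊗ₜ[ℂ] one' g) := rfl
@[simp] lemma E2_apply (c : g) : E2 g c = one' g ⊗ₜ[ℂ] (((c:g),(0:ℂ)) ⊗ₜ[ℂ] one' g) := rfl
@[simp] lemma E3_apply (c : g) : E3 g c = one' g ⊗ₜ[ℂ] (one' g ⊗ₜ[ℂ] ((c:g),(0:ℂ))) := rfl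

lemma T12_tmul (u v w : Ue g) : T12 g (u ⊗ₜ (v ⊗ₜ w)) =
    one' g ⊗ₜ[ℂ] ((⁅u.1,v.1⁆,(0:ℂ)) ⊗ₜ[ℂ] w) - (⁅u.1,v.1⁆,(0:ℂ)) ⊗ₜ[ℂ] (one' g ⊗ₜ[ℂ] w) := by
  simp [T12, Tmap_tmul, eMap_apply, sub_tmul, one']
lemma T23_tmul (u v w : Ue g) : T23 g (u ⊗ₜ (v ⊗ₜ w)) =
    u ⊗ₜ[ℂ] (one' g ⊗ₜ[ℂ] (⁅v.1,w.1⁆,(0:ℂ))) - u ⊗ₜ[ℂ] ((⁅v.1,w.1⁆,(0:ℂ)) ⊗ₜ[ℂ] one' g) := by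
  simp [T23, Tmap_tmul, eMap_apply, tmul_sub, one']
lemma T13_tmul (u v w : Ue g) : T13 g (u ⊗ₜ (v ⊗ₜ w)) =
    one' g ⊗ₜ[ℂ] (v ⊗ₜ[ℂ] (⁅u.1,w.1⁆,(0:ℂ))) - (⁅u.1,w.1⁆,(0:ℂ)) ⊗ₜ[ℂ] (v ⊗ₜ[ℂ] one' g) := by
  simp [T13, P23, T12_tmul, Tmap_tmul, eMap_apply, tmul_sub, sub_tmul, one']

lemma D1213 (u v w : Ue g) : T12 g (T13 g (u ⊗ₜ (v ⊗ₜ w))) =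
    E1 g ⁅⁅u.1,w.1⁆,v.1⁆ - E2 g ⁅⁅u.1,w.1⁆,v.1⁆ := by
  rw [T13_tmul, map_sub, T12_tmul, T12_tmul]
  simp [one', Prod.mk_zero_zero]
  try abel

lemma D1312 (u v w : Ue g) : T13 g (T12 g (u ⊗ₜ (v ⊗ₜ w))) =
    E1 g ⁅⁅u.1,v.1⁆,w.1⁆ - E3 g ⁅⁅u.1,v.1⁆,w.1⁆ := by
  rw [T12_tmul, map_sub, T13_tmul, T13_tmul]
  simp [one', Prod.mk_zero_zero]
  try abel

lemma D1223 (u v w : Ue g) : T12 g (T23 g (u ⊗ₜ (v ⊗ₜ w))) =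
    E1 g ⁅u.1,⁅v.1,w.1⁆⁆ - E2 g ⁅u.1,⁅v.1,w.1⁆⁆ := by
  rw [T23_tmul, map_sub, T12_tmul, T12_tmul]
  simp [one', Prod.mk_zero_zero]
  try abel

lemma D2312 (u v w : Ue g) : T23 g (T12 g (u ⊗ₜ (v ⊗ₜ w))) =
    E3 g ⁅⁅u.1,v.1⁆,w.1⁆ - E2 g ⁅⁅u.1,v.1⁆,w.1⁆ := by
  rw [T12_tmul, map_sub, T23_tmul, T23_tmul]
  simp [one', Prod.mk_zero_zero]
  try abel

lemma D1323 (u v w : Ue g) : T13 g (T23 g (u ⊗ₜ (v ⊗ₜ w))) =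
    E3 g ⁅u.1,⁅v.1,w.1⁆⁆ - E1 g ⁅u.1,⁅v.1,w.1⁆⁆ := by
  rw [T23_tmul, map_sub, T13_tmul, T13_tmul]
  simp [one', Prod.mk_zero_zero]
  try abel

lemma D2313 (u v w : Ue g) : T23 g (T13 g (u ⊗ₜ (v ⊗ₜ w))) =
    E3 g ⁅v.1,⁅u.1,w.1⁆⁆ - E2 g ⁅v.1,⁅u.1,w.1⁆⁆ := by
  rw [T13_tmul, map_sub, T23_tmul, T23_tmul]
  simp [one', Prod.mk_zero_zero]
  try abel

lemma key1 : T12 g ∘ₗ T13 g + T12 g ∘ₗ T23 g = T13 g ∘ₗ T12 g + T23 g ∘ₗ T12 g := by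
  apply ext3
  intro u v w
  simp only [LinearMap.add_apply, LinearMap.coe_comp, Function.comp_apply,
    D1213, D1312, D1223, D2312]
  have hr : ⁅w.1,⁅u.1,v.1⁆⁆ = ⁅v.1,⁅u.1,w.1⁆⁆ - ⁅u.1,⁅v.1,w.1⁆⁆ := by
    rw [← lie_skew w.1 ⁅u.1,v.1⁆, lie_lie]; abel
  simp only [lie_lie, ← lie_skew w.1 v.1, lie_neg, hr, map_sub, map_neg, map_add]
  abel

lemma key2 : T12 g ∘ₗ T23 g + T13 g ∘ₗ T23 g = T23 g ∘ₗ T12 g + T23 g ∘ₗ T13 g := by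
  apply ext3
  intro u v w
  simp only [LinearMap.add_apply, LinearMap.coe_comp, Function.comp_apply,
    D1223, D1323, D2312, D2313]
  simp only [lie_lie, map_sub, map_neg, map_add]
  abel

lemma key3 : T12 g ∘ₗ T13 g ∘ₗ T23 g = 0 := by
  apply ext3
  intro u v w
  simp only [LinearMap.coe_comp, Function.comp_apply, D1323, LinearMap.zero_apply,
    map_sub, E1_apply, E3_apply]
  rw [T12_tmul, T12_tmul]
  simp [one', Prod.mk_zero_zero]
  try abel

lemma key4 : T23 g ∘ₗ T13 g ∘ₗ T12 g = 0 := by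
  apply ext3
  intro u v w
  simp only [LinearMap.coe_comp, Function.comp_apply, D1312, LinearMap.zero_apply,
    map_sub, E1_apply, E3_apply]
  rw [T23_tmul, T23_tmul]
  simp [one', Prod.mk_zero_zero]
  try abel

lemma xv_ne : xv ≠ 0 := by
  intro h
  have h2 : (MvPolynomial.X 0 : MvPolynomial (Fin 2) ℂ) = 0 :=
    IsFractionRing.injective (MvPolynomial (Fin 2) ℂ) KK (by simpa [xv] using h)
  have := congrArg (MvPolynomial.eval (fun _ => (1:ℂ))) h2
  simp at this

lemma zv_ne : zv ≠ 0 := by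
  intro h
  have h2 : (MvPolynomial.X 1 : MvPolynomial (Fin 2) ℂ) = 0 :=
    IsFractionRing.injective (MvPolynomial (Fin 2) ℂ) KK (by simpa [zv] using h)
  have := congrArg (MvPolynomial.eval (fun _ => (1:ℂ))) h2
  simp at this

lemma xzv_ne : xv + zv ≠ 0 := by
  intro h
  have h2 : (MvPolynomial.X 0 + MvPolynomial.X 1 : MvPolynomial (Fin 2) ℂ) = 0 :=
    IsFractionRing.injective (MvPolynomial (Fin 2) ℂ) KK (by simpa [xv, zv, map_add] using h)
  have := congrArg (MvPolynomial.eval (fun _ => (1:ℂ))) h2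
  norm_num at this

lemma hq1 : zv⁻¹ * xv⁻¹ = (xv+zv)⁻¹ * xv⁻¹ + zv⁻¹ * (xv+zv)⁻¹ := by
  field_simp [xv_ne, zv_ne, xzv_ne]
  ring

lemma hq2 : xv⁻¹ * zv⁻¹ = (xv+zv)⁻¹ * xv⁻¹ + zv⁻¹ * (xv+zv)⁻¹ := by
  field_simp [xv_ne, zv_ne, xzv_ne]
  ring

/-- The map `S(x)` on `(g ⊕ ℂ) ⊗ (g ⊕ ℂ)` given by `S(x)(1⊗1)=1⊗1`, `S(x)(1⊗a)=1⊗a`,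
`S(x)(a⊗1)=a⊗1`, `S(x)(a⊗b) = a⊗b + x⁻¹(1⊗[a,b] - [a,b]⊗1)` satisfies the unitarity
condition `S₂₁(-x)S(x) = 1` and the quantum Yang–Baxter equation
`S₁₂(x)S₁₃(x+z)S₂₃(z) = S₂₃(z)S₁₃(x+z)S₁₂(x)`. -/
lemma stmt4a : S21op g (-(xv)) ∘ₗ Sop g xv = LinearMap.id := by
  have hTT : (Tmap g).baseChange KK ∘ₗ (Tmap g).baseChange KK = 0 := by
    rw [← LinearMap.baseChange_comp, TT, LinearMap.baseChange_zero]
  rw [S21op, Sop, sigmaT]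
  simp only [LinearMap.add_comp, LinearMap.comp_add, LinearMap.id_comp, LinearMap.comp_id,
    LinearMap.smul_comp, LinearMap.comp_smul, smul_smul, hTT, smul_zero, add_zero]
  rw [show ((-xv)⁻¹ : KK) = -xv⁻¹ from inv_neg, add_assoc, ← add_smul,
    show -xv⁻¹ + xv⁻¹ = (0:KK) from neg_add_cancel _, zero_smul, add_zero]

lemma smul_sub' (c : KK) (X Y : KK ⊗[ℂ] W g →ₗ[KK] KK ⊗[ℂ] W g) :
    c • (X - Y) = c • X - c • Y := smul_sub c X Y

lemma sub_self' (X : KK ⊗[ℂ] W g →ₗ[KK] KK ⊗[ℂ] W g) : X - X = 0 := sub_self X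

lemma stmt4b : Sij g (T12 g) xv ∘ₗ Sij g (T13 g) (xv + zv) ∘ₗ Sij g (T23 g) zv =
  Sij g (T23 g) zv ∘ₗ Sij g (T13 g) (xv + zv) ∘ₗ Sij g (T12 g) xv := by
  set A := (T12 g).baseChange KK with hA
  set B := (T13 g).baseChange KK with hB
  set C := (T23 g).baseChange KK with hC
  have hk1 : A ∘ₗ B + A ∘ₗ C = B ∘ₗ A + C ∘ₗ A := by
    rw [hA, hB, hC, ← LinearMap.baseChange_comp, ← LinearMap.baseChange_comp,
      ← LinearMap.baseChange_comp, ← LinearMap.baseChange_comp,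
      ← LinearMap.baseChange_add, ← LinearMap.baseChange_add, key1]
  have hk2 : A ∘ₗ C + B ∘ₗ C = C ∘ₗ A + C ∘ₗ B := by
    rw [hA, hB, hC, ← LinearMap.baseChange_comp, ← LinearMap.baseChange_comp,
      ← LinearMap.baseChange_comp, ← LinearMap.baseChange_comp,
      ← LinearMap.baseChange_add, ← LinearMap.baseChange_add, key2]
  have h3a : A ∘ₗ B ∘ₗ C = 0 := by
    rw [hA, hB, hC, ← LinearMap.baseChange_comp, ← LinearMap.baseChange_comp, key3,
      LinearMap.baseChange_zero]
  have h3b : C ∘ₗ B ∘ₗ A = 0 := by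
    rw [hA, hB, hC, ← LinearMap.baseChange_comp, ← LinearMap.baseChange_comp, key4,
      LinearMap.baseChange_zero]
  rw [← sub_eq_zero]
  have expand : Sij g (T12 g) xv ∘ₗ Sij g (T13 g) (xv + zv) ∘ₗ Sij g (T23 g) zv -
      Sij g (T23 g) zv ∘ₗ Sij g (T13 g) (xv + zv) ∘ₗ Sij g (T12 g) xv =
      ((xv+zv)⁻¹ * xv⁻¹) • (A ∘ₗ B + A ∘ₗ C - (B ∘ₗ A + C ∘ₗ A)) +
      (zv⁻¹ * (xv+zv)⁻¹) • (A ∘ₗ C + B ∘ₗ C - (C ∘ₗ A + C ∘ₗ B)) := by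
    simp only [Sij, ← hA, ← hB, ← hC, LinearMap.add_comp, LinearMap.comp_add,
      LinearMap.id_comp, LinearMap.comp_id, LinearMap.smul_comp, LinearMap.comp_smul,
      h3a, h3b, smul_zero, add_zero, smul_add, smul_smul]
    rw [hq1, hq2]
    simp only [add_smul, smul_sub, smul_sub', smul_add]
    ring_nf
    abel
  rw [expand, hk1, hk2, sub_self', sub_self', smul_zero, smul_zero, add_zero]

theorem stmt4 :
    (S21op g (-(xv)) ∘ₗ Sop g xv = LinearMap.id) ∧
    (Sij g (T12 g) xv ∘ₗ Sij g (T13 g) (xv + zv) ∘ₗ Sij g (T23 g) zv =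
      Sij g (T23 g) zv ∘ₗ Sij g (T13 g) (xv + zv) ∘ₗ Sij g (T12 g) xv) :=
  ⟨stmt4a g, stmt4b g⟩
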